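/- Let θ₁, θ₂ ∈ Θ and α ∈ (0,1). Then the α-skew Bhattacharyya distance between p_{θ₁} and p_{θ₂} equals the α-skew Jensen divergence between the natural parameters: B_α(p_{θ₁} : p_{θ₂}) = −log ∫ p_{θ₁}(x)^{1−α} p_{θ₂}(x)^{α} dμ(x) = J_F^α(θ₁:θ₂). -/

import Mathlib

open MeasureTheory Real
open scoped RealInnerProductSpace

/-- The α-skew Bhattacharyya distance between two members of the same
exponential family equals the α-skew Jensen divergence of the cumulant function:
`−log ∫ p_{θ₁}^{1−α} p_{θ₂}^{α} dμ = (1−α)F(θ₁) + αF(θ₂) − F((1−α)θ₁ + αθ₂)`. -/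
theorem Bhattacharyya_eq_Jensen_divergence_exponential_family
    (d : ℕ) (μ : Measure (EuclideanSpace ℝ (Fin d))) [SigmaFinite μ]
    (F : EuclideanSpace ℝ (Fin d) → ℝ)
    (hF : ∀ θ, F θ = Real.log (∫ x, Real.exp ⟪θ, x⟫ ∂μ))
    (p : EuclideanSpace ℝ (Fin d) → EuclideanSpace ℝ (Fin d) → ℝ)
    (hp : ∀ θ x, p θ x = Real.exp (⟪θ, x⟫ - F θ))
    (θ₁ θ₂ : EuclideanSpace ℝ (Fin d))
    (h1 : Integrable (fun x => Real.exp ⟪θ₁, x⟫) μ)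
    (h2 : Integrable (fun x => Real.exp ⟪θ₂, x⟫) μ)
    (α : ℝ) (hα : α ∈ Set.Ioo (0 : ℝ) 1) :
    -Real.log (∫ x, p θ₁ x ^ (1 - α) * p θ₂ x ^ α ∂μ)
      = (1 - α) * F θ₁ + α * F θ₂ - F ((1 - α) • θ₁ + α • θ₂) := by
  obtain ⟨hα0, hα1⟩ := hα
  set c : ℝ := (1 - α) * F θ₁ + α * F θ₂ with hc
  set θ := (1 - α) • θ₁ + α • θ₂ with hθ
  have hinner : ∀ x : EuclideanSpace ℝ (Fin d),
      ⟪θ, x⟫ = (1 - α) * ⟪θ₁, x⟫ + α * ⟪θ₂, x⟫ := by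
    intro x
    simp [hθ, inner_add_left, real_inner_smul_left, Finset.mul_sum, mul_assoc]
  have key : ∀ x, p θ₁ x ^ (1 - α) * p θ₂ x ^ α
      = Real.exp (-c) * Real.exp ⟪θ, x⟫ := by
    intro x
    rw [hp, hp, Real.rpow_def_of_pos (Real.exp_pos _), Real.rpow_def_of_pos (Real.exp_pos _),
      Real.log_exp, Real.log_exp, ← Real.exp_add, ← Real.exp_add, hinner, hc]
    congr 1
    ring
  rw [integral_congr_ae (Filter.Eventually.of_forall key), integral_const_mul]
  by_cases hμ : μ = 0
  · subst hμ
    simp [hF, hc]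
  · have : NeZero μ := ⟨hμ⟩
    have hcont : Continuous fun x : EuclideanSpace ℝ (Fin d) => Real.exp ⟪θ, x⟫ :=
      Real.continuous_exp.comp (continuous_const.inner continuous_id)
    have hIθ : Integrable (fun x => Real.exp ⟪θ, x⟫) μ := by
      refine ((h1.const_mul (1 - α)).add (h2.const_mul α)).mono'
        hcont.aestronglyMeasurable (Filter.Eventually.of_forall fun x => ?_)
      rw [Real.norm_eq_abs, abs_of_pos (Real.exp_pos _), hinner]
      exact convexOn_exp.2 (Set.mem_univ _) (Set.mem_univ _)
        (by linarith) hα0.le (by ring)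
    have hpos : 0 < ∫ x, Real.exp ⟪θ, x⟫ ∂μ := integral_exp_pos hIθ
    rw [Real.log_mul (Real.exp_ne_zero _) hpos.ne', Real.log_exp, hF θ]
    ring
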